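/- Suppose g : ℝʳ → ℝ satisfies |∂g/∂θ_i| ≤ a_i and |∂²g/∂θ_i∂θ_j| ≤ b_{ij} everywhere, and let F(θ) = s_γ(g(θ)) for the softplus s_γ(x) = (1/γ)ln(e^{γx}+1). Then |∂²F/∂θ_i∂θ_j| ≤ b_{ij} + γ a_i a_j everywhere. -/

import Mathlib

/-- Second-partial bound for the softplus composition: if `g : ℝʳ → ℝ` is
twice differentiable with `|∂g/∂θ_i| ≤ a i` and `|∂²g/∂θ_i∂θ_j| ≤ b i j`
everywhere, and `F(θ) = s_γ(g(θ))` with `s_γ(x) = (1/γ)ln(e^{γx}+1)`, `γ > 0`,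
then `|∂²F/∂θ_i∂θ_j| ≤ b i j + γ · a i · a j` everywhere. -/
theorem softplus_composition_second_partial_bound (r : ℕ)
    (g : EuclideanSpace ℝ (Fin r) → ℝ) (hg : ContDiff ℝ 2 g)
    (γ : ℝ) (hγ : 0 < γ) (a : Fin r → ℝ) (b : Fin r → Fin r → ℝ)
    (ha : ∀ (θ : EuclideanSpace ℝ (Fin r)) (i : Fin r),
      |fderiv ℝ g θ (EuclideanSpace.single i (1 : ℝ))| ≤ a i)
    (hb : ∀ (θ : EuclideanSpace ℝ (Fin r)) (i j : Fin r),
      |fderiv ℝ (fun η => fderiv ℝ g η (EuclideanSpace.single i (1 : ℝ))) θ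
          (EuclideanSpace.single j (1 : ℝ))| ≤ b i j) :
    ∀ (θ : EuclideanSpace ℝ (Fin r)) (i j : Fin r),
      |fderiv ℝ (fun η => fderiv ℝ
          (fun x => (1 / γ) * Real.log (Real.exp (γ * g x) + 1)) η
          (EuclideanSpace.single i (1 : ℝ))) θ
          (EuclideanSpace.single j (1 : ℝ))| ≤ b i j + γ * a i * a j := by
  intro θ i j
  set vi := EuclideanSpace.single i (1 : ℝ) with hvi
  set vj := EuclideanSpace.single j (1 : ℝ) with hvj
  have hgd : Differentiable ℝ g := hg.differentiable (by norm_num)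
  set φ : ℝ → ℝ := fun x => Real.exp (γ * x) / (Real.exp (γ * x) + 1) with hφdef
  have hpos : ∀ x : ℝ, 0 < Real.exp (γ * x) + 1 := fun x => by positivity
  -- derivative of softplus
  have hsder : ∀ x : ℝ,
      HasDerivAt (fun y => (1 / γ) * Real.log (Real.exp (γ * y) + 1)) (φ x) x := by
    intro x
    have h1 : HasDerivAt (fun y : ℝ => γ * y) γ x := by
      simpa using (hasDerivAt_id x).const_mul γ
    have h2 := (Real.hasDerivAt_exp (γ * x)).comp x h1
    have h3 := h2.add_const 1
    have h4 := h3.log (hpos x).ne'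
    have h5 := h4.const_mul (1 / γ)
    convert h5 using 1
    · rfl
    · rfl
    · rfl
    simp only [hφdef, Function.comp_apply]
    field_simp
  -- derivative of φ
  have hφder : ∀ x : ℝ,
      HasDerivAt φ (γ * Real.exp (γ * x) / (Real.exp (γ * x) + 1) ^ 2) x := by
    intro x
    have h1 : HasDerivAt (fun y : ℝ => γ * y) γ x := by
      simpa using (hasDerivAt_id x).const_mul γ
    have h2 := (Real.hasDerivAt_exp (γ * x)).comp x h1
    have h3 := h2.add_const 1
    have h4 := h2.div h3 (hpos x).ne'
    convert h4 using 1
    · rfl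
    · rfl
    · rfl
    have := (hpos x).ne'
    simp only [Function.comp_apply]
    field_simp
    ring
  -- first derivative of F
  have hF : ∀ η, HasFDerivAt (fun x => (1 / γ) * Real.log (Real.exp (γ * g x) + 1))
      (φ (g η) • fderiv ℝ g η) η := fun η =>
    (hsder (g η)).comp_hasFDerivAt η (hgd η).hasFDerivAt
  have hFd : (fun η => fderiv ℝ (fun x => (1 / γ) * Real.log (Real.exp (γ * g x) + 1)) η vi)
      = fun η => φ (g η) * (fderiv ℝ g η vi) := by
    funext η
    rw [(hF η).fderiv]
    simp
  rw [hFd]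
  -- differentiability of η ↦ fderiv g η vi
  have hDg1 : Differentiable ℝ (fun η => fderiv ℝ g η) :=
    (hg.fderiv_right (m := 1) (by norm_num)).differentiable (by norm_num)
  have hvid : Differentiable ℝ (fun η => fderiv ℝ g η vi) :=
    (ContinuousLinearMap.apply ℝ ℝ vi).differentiable.comp hDg1
  set D2 := fderiv ℝ (fun η => fderiv ℝ g η vi) θ with hD2
  have hc : HasFDerivAt (fun η => φ (g η))
      ((γ * Real.exp (γ * g θ) / (Real.exp (γ * g θ) + 1) ^ 2) • fderiv ℝ g θ) θ :=
    (hφder (g θ)).comp_hasFDerivAt θ (hgd θ).hasFDerivAt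
  have hd : HasFDerivAt (fun η => fderiv ℝ g η vi) D2 θ := (hvid θ).hasFDerivAt
  have hprod := hc.mul hd
  rw [show (fun η => φ (g η) * fderiv ℝ g η vi) = (fun η => φ (g η)) * (fun η => fderiv ℝ g η vi) from rfl, hprod.fderiv]
  simp only [ContinuousLinearMap.add_apply, ContinuousLinearMap.smul_apply, smul_eq_mul]
  -- now pure real arithmetic
  set E := Real.exp (γ * g θ) with hE
  have hE0 : 0 < E := Real.exp_pos _
  have hb' := hb θ i j
  rw [← hD2] at hb'
  have ha1 := ha θ i
  have ha2 := ha θ j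
  have hφ1 : |φ (g θ)| ≤ 1 := by
    rw [abs_of_nonneg (by positivity)]
    rw [div_le_one (by positivity)]
    linarith
  have hφ'1 : |γ * E / (E + 1) ^ 2| ≤ γ := by
    rw [abs_of_nonneg (by positivity)]
    rw [div_le_iff₀ (by positivity)]
    nlinarith [mul_nonneg hγ.le (sq_nonneg E), mul_pos hγ hE0]
  have key : ∀ p q x u y : ℝ, |p| ≤ 1 → |q| ≤ b i j → |x| ≤ a i → |u| ≤ γ →
      |y| ≤ a j → |p * q + x * (u * y)| ≤ b i j + γ * a i * a j := by
    intro p q x u y hp hq hx hu hy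
    have h := abs_add_le (p * q) (x * (u * y))
    rw [abs_mul, abs_mul, abs_mul] at h
    have h1 : |p| * |q| ≤ 1 * b i j :=
      mul_le_mul hp hq (abs_nonneg q) zero_le_one
    have h2 : |u| * |y| ≤ γ * a j := mul_le_mul hu hy (abs_nonneg y) hγ.le
    have h3 : |x| * (|u| * |y|) ≤ a i * (γ * a j) :=
      mul_le_mul hx h2 (by positivity) ((abs_nonneg x).trans hx)
    nlinarith
  exact key _ _ _ _ _ hφ1 hb' ha1 hφ'1 ha2
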